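/- Fix β ∈ ℝ^d, ε > 0, x ∈ {0,1}^d with k = ‖x‖₀ ≥ 1 nonzero entries, and y ∈ {0,1} with ℓ(x, y; β) > 0. Let β̂ be a random vector whose coordinates are independent and satisfy E[β̂_i] = β_i and |β̂_i − β_i| ≤ ε almost surely for each i (as obtained by unbiased randomized rounding of each coordinate of β to a grid of resolution ε). Then the expected relative logistic-loss error satisfies E[ (ℓ(x, y; β̂) − ℓ(x, y; β)) / ℓ(x, y; β) ] ≤ 2·√(2·π·k)·exp(ε²·k/2)·ε. -/

import Mathlib

open MeasureTheory ProbabilityTheory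
open scoped Classical

/-- The logistic (sigmoid) function `σ(z) = 1/(1 + e^{-z})`. -/
noncomputable def sigmoid (z : ℝ) : ℝ := 1 / (1 + Real.exp (-z))

/-- Logistic loss of a linear model `β` on example `(x, y)`:
`ℓ(x, y; β) = -y log σ(β·x) - (1-y) log (1 - σ(β·x))`. -/
noncomputable def logisticLoss {d : ℕ} (x : Fin d → ℝ) (y : ℝ) (β : Fin d → ℝ) : ℝ :=
  -(y * Real.log (sigmoid (∑ i, β i * x i)))
    - (1 - y) * Real.log (1 - sigmoid (∑ i, β i * x i))

section AuxAnalytic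

lemma log_one_add_mul_exp_le {v t : ℝ} (hv : 0 ≤ v) (ht : 0 ≤ t) :
    Real.log (1 + v * Real.exp t) ≤ Real.exp t * Real.log (1 + v) := by
  have hp : 1 ≤ Real.exp t := by simpa using Real.exp_le_exp.2 ht
  have hb := one_add_mul_self_le_rpow_one_add (s := v) (by linarith) hp
  calc Real.log (1 + v * Real.exp t) = Real.log (1 + Real.exp t * v) := by ring_nf
    _ ≤ Real.log ((1 + v) ^ (Real.exp t)) := by
        apply Real.log_le_log (by nlinarith [Real.exp_pos t]) hb
    _ = Real.exp t * Real.log (1 + v) := Real.log_rpow (by linarith) _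

lemma loss_ratio_le (z w : ℝ) :
    Real.log (1 + Real.exp w) ≤ Real.exp |w - z| * Real.log (1 + Real.exp z) := by
  have h1 : Real.log (1 + Real.exp w) ≤ Real.log (1 + Real.exp z * Real.exp |w - z|) := by
    rw [← Real.exp_add]
    apply Real.log_le_log (by positivity)
    have : w ≤ z + |w - z| := by
      have := le_abs_self (w - z); linarith
    simpa using Real.exp_le_exp.2 this
  exact h1.trans (log_one_add_mul_exp_le (Real.exp_nonneg z) (abs_nonneg _))

lemma sq_le_exp_add_exp_neg (a : ℝ) : a ^ 2 ≤ Real.exp a + Real.exp (-a) - 2 := by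
  have h1 : Real.exp a + Real.exp (-a) = 2 * Real.cosh a := by
    rw [Real.cosh_eq]; ring
  have h2 : Real.cosh a = 1 + 2 * Real.sinh (a/2) ^ 2 := by
    have := Real.cosh_two_mul (a/2)
    have h3 := Real.cosh_sq' (a/2)
    rw [show 2 * (a/2) = a by ring] at this
    rw [this, h3]; ring
  have h4 : (a/2) ^ 2 ≤ Real.sinh (a/2) ^ 2 := by
    have : |a/2| ≤ |Real.sinh (a/2)| := by
      rw [Real.abs_sinh]
      exact Real.self_le_sinh_iff.2 (abs_nonneg _)
    simpa [sq_abs] using (pow_le_pow_left₀ (abs_nonneg _) this 2)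
  nlinarith

lemma exp_sub_one_le_mul_exp {t : ℝ} : Real.exp t - 1 ≤ t * Real.exp t := by
  have h := Real.add_one_le_exp (-t)
  have h2 : (1 - t) * Real.exp t ≤ 1 := by
    have := Real.exp_pos t
    calc (1 - t) * Real.exp t ≤ Real.exp (-t) * Real.exp t := by nlinarith
      _ = 1 := by rw [← Real.exp_add]; simp
  nlinarith

lemma exp_quarter_le : Real.exp (1/4 : ℝ) ≤ 4/3 := by
  have h := Real.add_one_le_exp (-(1/4) : ℝ)
  have h2 : Real.exp (-(1/4):ℝ) * Real.exp ((1/4):ℝ) = 1 := by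
    rw [← Real.exp_add]; norm_num
  nlinarith [Real.exp_pos ((1/4):ℝ)]

lemma final_numeric {σ : ℝ} (hσ : 0 < σ) (hq12 : σ^2/2 ≤ 1/12) :
    (1/(2*σ)) * (2 * Real.exp (σ^2/2) - 2) + (σ/2) * (2 * Real.exp (2*σ^2))
      ≤ 2 * Real.sqrt (2 * Real.pi) * σ * Real.exp (σ^2/2) := by
  have hpi := Real.pi_gt_three
  have e1 : Real.exp (σ^2/2) - 1 ≤ (σ^2/2) * Real.exp (σ^2/2) := exp_sub_one_le_mul_exp
  have e2 : Real.exp (2*σ^2) = Real.exp (σ^2/2) * Real.exp (3*(σ^2/2)) := by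
    rw [← Real.exp_add]; ring_nf
  have e3 : Real.exp (3*(σ^2/2)) ≤ Real.exp (1/4 : ℝ) := Real.exp_le_exp.2 (by linarith)
  have e4 : Real.exp (1/4 : ℝ) ≤ 4/3 := exp_quarter_le
  have hsqrt1 : (1:ℝ) ≤ Real.sqrt (2 * Real.pi) := by
    rw [show (1:ℝ) = Real.sqrt 1 by simp]
    exact Real.sqrt_le_sqrt (by linarith)
  have hs : (0:ℝ) < Real.exp (σ^2/2) := Real.exp_pos _
  have hq0 : (0:ℝ) ≤ σ^2/2 := by positivity
  have t1 : (1/(2*σ)) * (2 * Real.exp (σ^2/2) - 2) ≤ (σ/2) * Real.exp (σ^2/2) := by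
    rw [div_mul_eq_mul_div, div_le_iff₀ (by positivity : (0:ℝ) < 2*σ)]
    nlinarith
  have t2 : (σ/2) * (2 * Real.exp (2*σ^2)) ≤ (4/3) * σ * Real.exp (σ^2/2) := by
    rw [e2]
    calc (σ/2) * (2 * (Real.exp (σ^2/2) * Real.exp (3*(σ^2/2))))
        = (σ * Real.exp (σ^2/2)) * Real.exp (3*(σ^2/2)) := by ring
      _ ≤ (σ * Real.exp (σ^2/2)) * (4/3) :=
          mul_le_mul_of_nonneg_left (e3.trans e4) (by positivity)
      _ = (4/3) * σ * Real.exp (σ^2/2) := by ring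
  nlinarith [t1, t2, mul_pos hσ hs, hsqrt1]

lemma exp_le_convex {c ε d : ℝ} (hε : 0 < ε) (hd : |d| ≤ ε) :
    Real.exp (c * d) ≤ Real.cosh (c * ε) + (Real.sinh (c * ε) / ε) * d := by
  obtain ⟨hd1, hd2⟩ := abs_le.1 hd
  have ha : (0:ℝ) ≤ (ε - d) / (2 * ε) := by
    apply div_nonneg (by linarith) (by linarith)
  have hb : (0:ℝ) ≤ (ε + d) / (2 * ε) := by
    apply div_nonneg (by linarith) (by linarith)
  have hab : (ε - d) / (2 * ε) + (ε + d) / (2 * ε) = 1 := by field_simp; ring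
  have h := convexOn_exp.2 (Set.mem_univ (-(c * ε))) (Set.mem_univ (c * ε)) ha hb hab
  have hne : (2 * ε) ≠ 0 := by positivity
  have hpt : (ε - d) / (2 * ε) * (-(c * ε)) + (ε + d) / (2 * ε) * (c * ε) = c * d := by
    rw [div_mul_eq_mul_div, div_mul_eq_mul_div, ← add_div, div_eq_iff hne]
    ring
  simp only [smul_eq_mul] at h
  rw [hpt] at h
  refine h.trans (le_of_eq ?_)
  rw [Real.cosh_eq, Real.sinh_eq]
  field_simp
  ring

lemma logisticLoss_one {d : ℕ} (x : Fin d → ℝ) (β : Fin d → ℝ) :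
    logisticLoss x 1 β = Real.log (1 + Real.exp (-∑ i, β i * x i)) := by
  have h : sigmoid (∑ i, β i * x i) = (1 + Real.exp (-∑ i, β i * x i))⁻¹ := by
    rw [sigmoid, one_div]
  rw [logisticLoss, h, Real.log_inv]; ring

lemma logisticLoss_zero {d : ℕ} (x : Fin d → ℝ) (β : Fin d → ℝ) :
    logisticLoss x 0 β = Real.log (1 + Real.exp (∑ i, β i * x i)) := by
  set z := ∑ i, β i * x i
  have hz : (0:ℝ) < 1 + Real.exp (-z) := by positivity
  have hz2 : (0:ℝ) < 1 + Real.exp z := by positivity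
  have h : 1 - sigmoid z = (1 + Real.exp z)⁻¹ := by
    rw [sigmoid]
    rw [Real.exp_neg]
    field_simp
    ring
  rw [logisticLoss, h, Real.log_inv]; ring

end AuxAnalytic

section AuxProb

lemma master {Ω : Type*} [MeasurableSpace Ω] (P : Measure Ω) [IsProbabilityMeasure P]
    (Z r : Ω → ℝ) (hZm : Measurable Z) (hrm : AEStronglyMeasurable r P)
    (σ B : ℝ) (hσ : 0 < σ) (hB : 0 ≤ B)
    (hbd : ∀ᵐ ω ∂P, |Z ω| ≤ B)
    (hmgf : ∀ c : ℝ, ∫ ω, Real.exp (c * Z ω) ∂P ≤ Real.exp (c^2 * σ^2 / 2))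
    (hlow : ∀ ω, -1 ≤ r ω)
    (hup : ∀ ω, r ω ≤ Real.exp |Z ω| - 1) :
    ∫ ω, r ω ∂P ≤ 2 * Real.sqrt (2 * Real.pi) * σ * Real.exp (σ^2/2) := by
  have Iexp : ∀ c : ℝ, Integrable (fun ω => Real.exp (c * Z ω)) P := by
    intro c
    refine Integrable.mono' (integrable_const (Real.exp (|c| * B)))
      ((hZm.const_mul c).exp.aestronglyMeasurable) ?_
    filter_upwards [hbd] with ω hω
    rw [Real.norm_eq_abs, abs_of_pos (Real.exp_pos _)]
    apply Real.exp_le_exp.2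
    calc c * Z ω ≤ |c * Z ω| := le_abs_self _
      _ = |c| * |Z ω| := abs_mul _ _
      _ ≤ |c| * B := by apply mul_le_mul_of_nonneg_left hω (abs_nonneg c)
  have Ir : Integrable r P := by
    refine Integrable.mono' (integrable_const (Real.exp B)) hrm ?_
    have hexpB : (1:ℝ) ≤ Real.exp B := by
      rw [show (1:ℝ) = Real.exp 0 by simp]; exact Real.exp_le_exp.2 hB
    filter_upwards [hbd] with ω hω
    rw [Real.norm_eq_abs, abs_le]
    refine ⟨by have := hlow ω; linarith, ?_⟩
    have h1 := hup ω
    have h2 : Real.exp |Z ω| ≤ Real.exp B := Real.exp_le_exp.2 hω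
    linarith
  have hq : (0:ℝ) ≤ σ^2/2 := by positivity
  have hexpq : (1:ℝ) ≤ Real.exp (σ^2/2) := by
    rw [show (1:ℝ) = Real.exp 0 by simp]; exact Real.exp_le_exp.2 hq
  have m1 : ∫ ω, Real.exp (1 * Z ω) ∂P ≤ Real.exp (σ^2/2) := by
    have := hmgf 1; rwa [show (1:ℝ)^2 * σ^2 / 2 = σ^2/2 by ring] at this
  have m1' : ∫ ω, Real.exp ((-1) * Z ω) ∂P ≤ Real.exp (σ^2/2) := by
    have := hmgf (-1); rwa [show ((-1:ℝ))^2 * σ^2 / 2 = σ^2/2 by ring] at this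
  have m2 : ∫ ω, Real.exp (2 * Z ω) ∂P ≤ Real.exp (2 * σ^2) := by
    have := hmgf 2; rwa [show ((2:ℝ))^2 * σ^2 / 2 = 2 * σ^2 by ring] at this
  have m2' : ∫ ω, Real.exp ((-2) * Z ω) ∂P ≤ Real.exp (2 * σ^2) := by
    have := hmgf (-2); rwa [show ((-2:ℝ))^2 * σ^2 / 2 = 2 * σ^2 by ring] at this
  by_cases hc : 1 ≤ Real.sqrt (2 * Real.pi) * σ
  · -- big σ branch
    have hpt : ∀ ω, r ω ≤ Real.exp (1 * Z ω) + Real.exp ((-1) * Z ω) - 1 := by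
      intro ω
      have h1 := hup ω
      have h2 : Real.exp |Z ω| ≤ Real.exp (Z ω) + Real.exp (-(Z ω)) := by
        rcases abs_cases (Z ω) with ⟨h, _⟩ | ⟨h, _⟩ <;> rw [h] <;>
          nlinarith [Real.exp_pos (Z ω), Real.exp_pos (-(Z ω))]
      simp only [one_mul, neg_one_mul]
      linarith
    have I12 : Integrable (fun ω => Real.exp (1 * Z ω) + Real.exp ((-1) * Z ω)) P :=
      (Iexp 1).add (Iexp (-1))
    have I2 : Integrable (fun ω => Real.exp (1 * Z ω) + Real.exp ((-1) * Z ω) - 1) P :=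
      I12.sub (integrable_const 1)
    have step := integral_mono Ir I2 hpt
    have heval : ∫ ω, (Real.exp (1 * Z ω) + Real.exp ((-1) * Z ω) - 1) ∂P
        = (∫ ω, Real.exp (1 * Z ω) ∂P) + (∫ ω, Real.exp ((-1) * Z ω) ∂P) - 1 := by
      rw [integral_sub I12 (integrable_const 1), integral_add (Iexp 1) (Iexp (-1))]
      simp
    have hs : (0:ℝ) < Real.exp (σ^2/2) := Real.exp_pos _
    calc ∫ ω, r ω ∂P ≤ _ := step
      _ = (∫ ω, Real.exp (1 * Z ω) ∂P) + (∫ ω, Real.exp ((-1) * Z ω) ∂P) - 1 := heval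
      _ ≤ Real.exp (σ^2/2) + Real.exp (σ^2/2) - 1 := by linarith
      _ ≤ 2 * Real.sqrt (2 * Real.pi) * σ * Real.exp (σ^2/2) := by nlinarith
  · -- small σ branch
    push_neg at hc
    have h2pinn : (0:ℝ) ≤ 2 * Real.pi := by positivity
    have hsq := Real.sq_sqrt h2pinn
    have hsn := Real.sqrt_nonneg (2 * Real.pi)
    have hpi := Real.pi_gt_three
    have h0 : (0:ℝ) ≤ Real.sqrt (2 * Real.pi) * σ := mul_nonneg hsn hσ.le
    have h1 : (Real.sqrt (2 * Real.pi) * σ)^2 < 1 := by nlinarith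
    have hσ2 : 2 * Real.pi * σ^2 < 1 := by rw [mul_pow, hsq] at h1; exact h1
    have hq12 : σ^2/2 ≤ 1/12 := by nlinarith
    set G : Ω → ℝ := fun ω => (1/(2*σ)) * (Real.exp (1 * Z ω) + Real.exp ((-1) * Z ω) - 2)
      + (σ/2) * (Real.exp (2 * Z ω) + Real.exp ((-2) * Z ω)) with hG
    have hpt : ∀ ω, r ω ≤ G ω := by
      intro ω
      set a := Z ω with ha
      have h1 : r ω ≤ Real.exp |a| - 1 := hup ω
      have h2 : Real.exp |a| - 1 ≤ |a| * Real.exp |a| := exp_sub_one_le_mul_exp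
      have h3 : 2*σ*(|a| * Real.exp |a|) ≤ a^2 + σ^2 * (Real.exp |a|)^2 := by
        nlinarith [sq_nonneg (|a| - σ * Real.exp |a|), sq_abs a]
      have h4 : (Real.exp |a|)^2 = Real.exp (2*|a|) := by
        rw [sq, ← Real.exp_add]; ring_nf
      have h5 : Real.exp (2*|a|) ≤ Real.exp (2*a) + Real.exp ((-2)*a) := by
        rcases le_or_gt 0 a with h | h
        · rw [abs_of_nonneg h]
          have := Real.exp_pos ((-2)*a); linarith
        · rw [abs_of_neg h, show (2:ℝ) * -a = (-2)*a by ring]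
          have := Real.exp_pos (2*a); linarith
      have h6 : a^2 ≤ Real.exp (1*a) + Real.exp ((-1)*a) - 2 := by
        have := sq_le_exp_add_exp_neg a
        rw [one_mul, show ((-1:ℝ))*a = -a by ring]
        linarith
      have h12 : r ω ≤ |a| * Real.exp |a| := by linarith
      have h13 : 2*σ*(r ω) ≤ 2*σ*(|a| * Real.exp |a|) :=
        mul_le_mul_of_nonneg_left h12 (by positivity)
      have h14 : σ^2 * (Real.exp |a|)^2 = σ^2 * Real.exp (2*|a|) := by rw [h4]
      have h15 : σ^2 * Real.exp (2*|a|) ≤ σ^2 * (Real.exp (2*a) + Real.exp ((-2)*a)) :=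
        mul_le_mul_of_nonneg_left h5 (by positivity)
      have key : 2*σ*(r ω) ≤ (Real.exp (1*a) + Real.exp ((-1)*a) - 2)
          + σ^2 * (Real.exp (2*a) + Real.exp ((-2)*a)) := by
        linarith [h13, h3, h14, h15, h6]
      have hGω : G ω = ((Real.exp (1*a) + Real.exp ((-1)*a) - 2)
          + σ^2 * (Real.exp (2*a) + Real.exp ((-2)*a))) / (2*σ) := by
        simp only [hG]; field_simp; ring
      rw [hGω, le_div_iff₀ (by positivity : (0:ℝ) < 2*σ)]
      linarith
    have IG : Integrable G P := by
      apply Integrable.add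
      · exact (((Iexp 1).add (Iexp (-1))).sub (integrable_const 2)).const_mul _
      · exact ((Iexp 2).add (Iexp (-2))).const_mul _
    have step := integral_mono Ir IG hpt
    have heval : ∫ ω, G ω ∂P
        = (1/(2*σ)) * ((∫ ω, Real.exp (1 * Z ω) ∂P) + (∫ ω, Real.exp ((-1) * Z ω) ∂P) - 2)
          + (σ/2) * ((∫ ω, Real.exp (2 * Z ω) ∂P) + (∫ ω, Real.exp ((-2) * Z ω) ∂P)) := by
      have I1s : Integrable (fun ω => Real.exp (1 * Z ω) + Real.exp ((-1) * Z ω)) P :=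
        (Iexp 1).add (Iexp (-1))
      have I1s' : Integrable (fun ω => Real.exp (1 * Z ω) + Real.exp ((-1) * Z ω) - 2) P :=
        I1s.sub (integrable_const 2)
      have I2s : Integrable (fun ω => Real.exp (2 * Z ω) + Real.exp ((-2) * Z ω)) P :=
        (Iexp 2).add (Iexp (-2))
      rw [hG]
      rw [integral_add (I1s'.const_mul _) (I2s.const_mul _), integral_const_mul,
        integral_const_mul, integral_sub I1s (integrable_const 2),
        integral_add (Iexp 1) (Iexp (-1)), integral_add (Iexp 2) (Iexp (-2))]
      simp
    have final := final_numeric hσ hq12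
    calc ∫ ω, r ω ∂P ≤ _ := step
      _ = _ := heval
      _ ≤ (1/(2*σ)) * (2 * Real.exp (σ^2/2) - 2) + (σ/2) * (2 * Real.exp (2*σ^2)) := by
          have c1 : (0:ℝ) ≤ 1/(2*σ) := by positivity
          have c2 : (0:ℝ) ≤ σ/2 := by positivity
          exact add_le_add (mul_le_mul_of_nonneg_left (by linarith) c1)
            (mul_le_mul_of_nonneg_left (by linarith) c2)
      _ ≤ _ := final

lemma mgf_bound {Ω : Type*} [MeasurableSpace Ω] (P : Measure Ω) [IsProbabilityMeasure P]
    {d : ℕ} (βhat : Fin d → Ω → ℝ) (β : Fin d → ℝ) (ε : ℝ) (hε : 0 < ε)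
    (hmeas : ∀ i, Measurable (βhat i))
    (hindep : iIndepFun βhat P)
    (hmean : ∀ i, (∫ ω, βhat i ω ∂P) = β i)
    (hbdd : ∀ i, ∀ᵐ ω ∂P, |βhat i ω - β i| ≤ ε)
    (T : Finset (Fin d)) (c : ℝ) :
    ∫ ω, Real.exp (c * (∑ i ∈ T, (βhat i ω - β i))) ∂P
      ≤ Real.exp (c^2 * ε^2 * T.card / 2) := by
  set D : Fin d → Ω → ℝ := fun i ω => βhat i ω - β i with hD
  have hDmeas : ∀ i, Measurable (D i) := fun i => (hmeas i).sub_const _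
  have hDindep : iIndepFun D P := by
    have := hindep.comp (fun i => (· - β i)) (fun i => measurable_id.sub_const _)
    exact this
  have hIβ : ∀ i, Integrable (βhat i) P := by
    intro i
    refine Integrable.mono' (integrable_const (|β i| + ε)) (hmeas i).aestronglyMeasurable ?_
    filter_upwards [hbdd i] with ω hω
    rw [Real.norm_eq_abs]
    have := abs_sub_abs_le_abs_sub (βhat i ω) (β i)
    linarith
  have hID : ∀ i, Integrable (D i) P := fun i => (hIβ i).sub (integrable_const _)
  have hDzero : ∀ i, (∫ ω, D i ω ∂P) = 0 := by
    intro i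
    rw [hD]
    simp only
    rw [integral_sub (hIβ i) (integrable_const _), hmean i, integral_const]
    simp
  have hcoord : ∀ i, mgf (D i) P c ≤ Real.exp (c^2 * ε^2 / 2) := by
    intro i
    have Iexp : Integrable (fun ω => Real.exp (c * D i ω)) P := by
      refine Integrable.mono' (integrable_const (Real.exp (|c| * ε)))
        (((hDmeas i).const_mul c).exp.aestronglyMeasurable) ?_
      filter_upwards [hbdd i] with ω hω
      rw [Real.norm_eq_abs, abs_of_pos (Real.exp_pos _)]
      apply Real.exp_le_exp.2
      calc c * D i ω ≤ |c * D i ω| := le_abs_self _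
        _ = |c| * |D i ω| := abs_mul _ _
        _ ≤ |c| * ε := mul_le_mul_of_nonneg_left hω (abs_nonneg c)
    have Ilin : Integrable (fun ω => Real.cosh (c * ε) + (Real.sinh (c * ε) / ε) * D i ω) P :=
      (integrable_const _).add ((hID i).const_mul _)
    have step : mgf (D i) P c
        ≤ ∫ ω, (Real.cosh (c * ε) + (Real.sinh (c * ε) / ε) * D i ω) ∂P := by
      refine integral_mono_ae Iexp Ilin ?_
      filter_upwards [hbdd i] with ω hω
      exact exp_le_convex hε hω
    have heval : ∫ ω, (Real.cosh (c * ε) + (Real.sinh (c * ε) / ε) * D i ω) ∂P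
        = Real.cosh (c * ε) := by
      rw [integral_add (integrable_const _) ((hID i).const_mul _), integral_const,
        integral_const_mul, hDzero i]
      simp
    calc mgf (D i) P c ≤ _ := step
      _ = Real.cosh (c * ε) := heval
      _ ≤ Real.exp ((c * ε)^2 / 2) := Real.cosh_le_exp_half_sq _
      _ = Real.exp (c^2 * ε^2 / 2) := by rw [show (c*ε)^2 = c^2*ε^2 by ring]
  have hsum : (fun ω => Real.exp (c * (∑ i ∈ T, (βhat i ω - β i))))
      = fun ω => Real.exp (c * (∑ i ∈ T, D i) ω) := by
    funext ω
    simp only [Finset.sum_apply, hD]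
  calc ∫ ω, Real.exp (c * (∑ i ∈ T, (βhat i ω - β i))) ∂P
      = mgf (∑ i ∈ T, D i) P c := by rw [hsum]; rfl
    _ = ∏ i ∈ T, mgf (D i) P c := hDindep.mgf_sum hDmeas T
    _ ≤ ∏ i ∈ T, Real.exp (c^2 * ε^2 / 2) :=
        Finset.prod_le_prod (fun i _ => mgf_nonneg) (fun i _ => hcoord i)
    _ = Real.exp (c^2 * ε^2 / 2) ^ T.card := Finset.prod_const _
    _ = Real.exp (c^2 * ε^2 * T.card / 2) := by
        rw [← Real.exp_nat_mul]
        congr 1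
        ring

end AuxProb

/-- Expected relative logistic-loss error of a model obtained by unbiased independent
per-coordinate rounding to resolution `ε`: it is at most `2 √(2πk) exp(ε²k/2) ε`,
where `k = ‖x‖₀` is the number of nonzero entries of the binary feature vector `x`. -/
theorem expected_relative_error_of_rounding
    {Ω : Type*} [MeasurableSpace Ω] (P : Measure Ω) [IsProbabilityMeasure P]
    (d : ℕ) (β : Fin d → ℝ) (ε : ℝ) (hε : 0 < ε)
    (x : Fin d → ℝ) (hx : ∀ i, x i = 0 ∨ x i = 1)
    (k : ℕ) (hk : k = (Finset.univ.filter fun i => x i ≠ 0).card) (hk1 : 1 ≤ k)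
    (y : ℝ) (hy : y = 0 ∨ y = 1) (hpos : 0 < logisticLoss x y β)
    (βhat : Fin d → Ω → ℝ)
    (hmeas : ∀ i, Measurable (βhat i))
    (hindep : iIndepFun βhat P)
    (hmean : ∀ i, (∫ ω, βhat i ω ∂P) = β i)
    (hbdd : ∀ i, ∀ᵐ ω ∂P, |βhat i ω - β i| ≤ ε) :
    (∫ ω, (logisticLoss x y (fun i => βhat i ω) - logisticLoss x y β)
        / logisticLoss x y β ∂P)
      ≤ 2 * Real.sqrt (2 * Real.pi * k) * Real.exp (ε ^ 2 * k / 2) * ε := by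
  classical
  set T : Finset (Fin d) := Finset.univ.filter (fun i => x i ≠ 0) with hT
  set S : Ω → ℝ := fun ω => ∑ i, βhat i ω * x i with hS
  set s0 : ℝ := ∑ i, β i * x i with hs0
  set Z : Ω → ℝ := fun ω => S ω - s0 with hZ
  have hSm : Measurable S := by
    apply Finset.measurable_sum
    exact fun i _ => (hmeas i).mul_const _
  have hZm : Measurable Z := hSm.sub_const _
  have hZeq : ∀ ω, Z ω = ∑ i ∈ T, (βhat i ω - β i) := by
    intro ω
    calc Z ω = ∑ i, (βhat i ω * x i - β i * x i) := by
          simp only [hZ, hS, hs0]; rw [← Finset.sum_sub_distrib]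
      _ = ∑ i, (if x i ≠ 0 then (βhat i ω - β i) else 0) := by
          apply Finset.sum_congr rfl
          intro i _
          rcases hx i with h | h <;> simp [h]
      _ = ∑ i ∈ T, (βhat i ω - β i) := by
          rw [hT, Finset.sum_filter]
  have hkc : (T.card : ℝ) = (k : ℝ) := by rw [hk]
  -- σ and its properties
  set σ : ℝ := ε * Real.sqrt k with hσdef
  have hknn : (0:ℝ) ≤ (k:ℝ) := by positivity
  have hsqk : Real.sqrt (k:ℝ) > 0 := by
    apply Real.sqrt_pos.2
    have : (1:ℝ) ≤ (k:ℝ) := by exact_mod_cast hk1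
    linarith
  have hσ : 0 < σ := mul_pos hε hsqk
  have hσsq : σ^2 = ε^2 * k := by
    rw [hσdef, mul_pow, Real.sq_sqrt hknn]
  -- a.e. bound on Z
  have hbdall : ∀ᵐ ω ∂P, ∀ i, |βhat i ω - β i| ≤ ε := (MeasureTheory.ae_all_iff).2 hbdd
  have hbd : ∀ᵐ ω ∂P, |Z ω| ≤ ε * k := by
    filter_upwards [hbdall] with ω hω
    rw [hZeq ω]
    calc |∑ i ∈ T, (βhat i ω - β i)| ≤ ∑ i ∈ T, |βhat i ω - β i| :=
          Finset.abs_sum_le_sum_abs _ _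
      _ ≤ T.card • ε := Finset.sum_le_card_nsmul _ _ _ (fun i _ => hω i)
      _ = ε * k := by
          rw [nsmul_eq_mul, hkc]; ring
  -- mgf bound
  have hmgf : ∀ c : ℝ, ∫ ω, Real.exp (c * Z ω) ∂P ≤ Real.exp (c^2 * σ^2 / 2) := by
    intro c
    have h1 : (fun ω => Real.exp (c * Z ω))
        = fun ω => Real.exp (c * (∑ i ∈ T, (βhat i ω - β i))) := by
      funext ω; rw [hZeq ω]
    rw [h1]
    have := mgf_bound P βhat β ε hε hmeas hindep hmean hbdd T c
    rwa [show c^2 * ε^2 * (T.card:ℝ) / 2 = c^2 * σ^2 / 2 by rw [hσsq, hkc]; ring] at this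
  -- final RHS equality
  have hRHS : 2 * Real.sqrt (2 * Real.pi * k) * Real.exp (ε ^ 2 * k / 2) * ε
      = 2 * Real.sqrt (2 * Real.pi) * σ * Real.exp (σ^2/2) := by
    rw [Real.sqrt_mul (by positivity : (0:ℝ) ≤ 2 * Real.pi), hσsq, hσdef]
    ring
  rw [hRHS]
  -- case on y
  rcases hy with rfl | rfl
  · -- y = 0
    have hl0 : logisticLoss x 0 β = Real.log (1 + Real.exp s0) := logisticLoss_zero x β
    set ℓ0 : ℝ := Real.log (1 + Real.exp s0) with hℓ0def
    have hℓ0 : 0 < ℓ0 := by rw [← hl0]; exact hpos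
    set r : Ω → ℝ := fun ω => (Real.log (1 + Real.exp (S ω)) - ℓ0) / ℓ0 with hr
    have hfun : (fun ω => (logisticLoss x 0 (fun i => βhat i ω) - logisticLoss x 0 β)
        / logisticLoss x 0 β) = r := by
      funext ω
      rw [hr, logisticLoss_zero x (fun i => βhat i ω), logisticLoss_zero x β]
    rw [hfun]
    have hrm : AEStronglyMeasurable r P := by
      apply Measurable.aestronglyMeasurable
      exact ((Real.measurable_log.comp
        (measurable_const.add (Real.measurable_exp.comp hSm))).sub_const _).div_const _
    have hlow : ∀ ω, -1 ≤ r ω := by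
      intro ω
      rw [hr]
      have hnn : 0 ≤ Real.log (1 + Real.exp (S ω)) :=
        Real.log_nonneg (by nlinarith [Real.exp_pos (S ω)])
      rw [le_div_iff₀ hℓ0]
      linarith
    have hup : ∀ ω, r ω ≤ Real.exp |Z ω| - 1 := by
      intro ω
      rw [hr]
      have h1 : Real.log (1 + Real.exp (S ω)) ≤ Real.exp |S ω - s0| * ℓ0 := loss_ratio_le s0 (S ω)
      have h2 : |Z ω| = |S ω - s0| := by rw [hZ]
      rw [div_le_iff₀ hℓ0, h2]
      nlinarith
    exact master P Z r hZm hrm σ (ε * k) hσ (by positivity) hbd hmgf hlow hup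
  · -- y = 1
    have hl0 : logisticLoss x 1 β = Real.log (1 + Real.exp (-s0)) := logisticLoss_one x β
    set ℓ0 : ℝ := Real.log (1 + Real.exp (-s0)) with hℓ0def
    have hℓ0 : 0 < ℓ0 := by rw [← hl0]; exact hpos
    set r : Ω → ℝ := fun ω => (Real.log (1 + Real.exp (-(S ω))) - ℓ0) / ℓ0 with hr
    have hfun : (fun ω => (logisticLoss x 1 (fun i => βhat i ω) - logisticLoss x 1 β)
        / logisticLoss x 1 β) = r := by
      funext ω
      rw [hr, logisticLoss_one x (fun i => βhat i ω), logisticLoss_one x β]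
    rw [hfun]
    have hrm : AEStronglyMeasurable r P := by
      apply Measurable.aestronglyMeasurable
      exact ((Real.measurable_log.comp
        (measurable_const.add (Real.measurable_exp.comp hSm.neg))).sub_const _).div_const _
    have hlow : ∀ ω, -1 ≤ r ω := by
      intro ω
      rw [hr]
      have hnn : 0 ≤ Real.log (1 + Real.exp (-(S ω))) :=
        Real.log_nonneg (by nlinarith [Real.exp_pos (-(S ω))])
      rw [le_div_iff₀ hℓ0]
      linarith
    have hup : ∀ ω, r ω ≤ Real.exp |Z ω| - 1 := by
      intro ω
      rw [hr]
      have h1 : Real.log (1 + Real.exp (-(S ω))) ≤ Real.exp |(-(S ω)) - (-s0)| * ℓ0 :=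
        loss_ratio_le (-s0) (-(S ω))
      have h2 : |Z ω| = |(-(S ω)) - (-s0)| := by
        rw [hZ]
        rw [show (-(S ω)) - (-s0) = -(S ω - s0) by ring, abs_neg]
      rw [div_le_iff₀ hℓ0, h2]
      nlinarith
    exact master P Z r hZm hrm σ (ε * k) hσ (by positivity) hbd hmgf hlow hup
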